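/- arXiv:1612.08306 — 2 statements merged into one kernel-verified Lean document; each statement's English description precedes it below -/
import Mathlib

section
/- If G is a Δ-regular multigraph and ω(G) ≤ Δ, then τ(G) = Δ. -/
open Finset

/-- A multigraph: a finite vertex type, a finite edge type, an endpoints map
into unordered pairs of vertices, and no loops. -/
structure Multigraph where
  V : Type
  E : Type
  fintypeV : Fintype V
  decEqV : DecidableEq V
  fintypeE : Fintype E
  decEqE : DecidableEq E
  ends : E → Sym2 V
  noLoops : ∀ e, ¬ (ends e).IsDiag

attribute [instance] Multigraph.fintypeV Multigraph.decEqV Multigraph.fintypeE Multigraph.decEqE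

namespace Multigraph

open scoped Classical

variable (G : Multigraph)

/-- The degree of a vertex: the number of edges incident to it. -/
noncomputable def degree (x : G.V) : ℕ :=
  (Finset.univ.filter fun e => x ∈ G.ends e).card

/-- The maximum vertex degree Δ(G). -/
noncomputable def maxDegree : ℕ :=
  Finset.univ.sup fun x : G.V => G.degree x

/-- E(S): the edges with both endpoints in S. -/
noncomputable def edgesIn (S : Finset G.V) : Finset G.E :=
  Finset.univ.filter fun e => ∀ x ∈ G.ends e, x ∈ S

/-- Ceiling division of natural numbers: ⌈a / b⌉. -/
def ceilDiv (a b : ℕ) : ℕ := (a + b - 1) / b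

/-- The density ω(G) = max over vertex subsets S with |S| ≥ 2 of ⌈|E(S)| / ⌊|S|/2⌋⌉. -/
noncomputable def density : ℕ :=
  (Finset.univ.powerset.filter fun S : Finset G.V => 2 ≤ S.card).sup
    fun S => ceilDiv (G.edgesIn S).card (S.card / 2)

/-- A proper edge-coloring with colors `Fin c`: adjacent (distinct, sharing an endpoint)
edges receive distinct colors. -/
def IsProperEdgeColoring (c : ℕ) (col : G.E → Fin c) : Prop :=
  ∀ e f : G.E, e ≠ f → (∃ x : G.V, x ∈ G.ends e ∧ x ∈ G.ends f) → col e ≠ col f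

/-- The chromatic index χ'(G): the least number of colors in a proper edge-coloring. -/
noncomputable def chromaticIndex : ℕ :=
  sInf {c : ℕ | ∃ col : G.E → Fin c, G.IsProperEdgeColoring c col}

/-- μ(x): the set of colors used on the edges incident to x. -/
noncomputable def mu {c : ℕ} (col : G.E → Fin c) (x : G.V) : Finset (Fin c) :=
  (Finset.univ.filter fun e => x ∈ G.ends e).image col

/-- A degree-coloring with c colors: the degree condition and the cover condition. -/
def IsDegreeColoring (c : ℕ) (μ : G.V → Finset (Fin c)) : Prop :=
  (∀ x : G.V, (μ x).card = G.degree x) ∧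
  ∀ S : Finset G.V,
    (G.edgesIn S).card ≤ ∑ i : Fin c, (S.filter fun x => i ∈ μ x).card / 2

/-- The degree-coloring index τ(G): the least c admitting a degree-coloring. -/
noncomputable def tau : ℕ :=
  sInf {c : ℕ | ∃ μ : G.V → Finset (Fin c), G.IsDegreeColoring c μ}

/-- A matching: a set of pairwise non-adjacent edges. -/
def IsMatching (M : Finset G.E) : Prop :=
  ∀ e ∈ M, ∀ f ∈ M, e ≠ f → ∀ x : G.V, ¬ (x ∈ G.ends e ∧ x ∈ G.ends f)

/-- π(F): the maximum size of a matching consisting of edges from F. -/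
noncomputable def matchingNumber (F : Finset G.E) : ℕ :=
  (F.powerset.filter fun M => G.IsMatching M).sup Finset.card

/-- ω*(G) = max over nonempty F ⊆ E of ⌈|F| / π(F)⌉. -/
noncomputable def omegaStar : ℕ :=
  (Finset.univ.powerset.filter fun F : Finset G.E => F.Nonempty).sup
    fun F => ceilDiv F.card (G.matchingNumber F)

/-- H is a sub-multigraph of G. -/
def IsSub (H G : Multigraph) : Prop :=
  ∃ (f : H.V ↪ G.V) (g : H.E ↪ G.E),
    ∀ e : H.E, G.ends (g e) = (H.ends e).map f

/-- H is an induced sub-multigraph of G: additionally every edge of G with both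
endpoints in the image of the vertex embedding comes from H. -/
def IsInducedSub (H G : Multigraph) : Prop :=
  ∃ (f : H.V ↪ G.V) (g : H.E ↪ G.E),
    (∀ e : H.E, G.ends (g e) = (H.ends e).map f) ∧
    ∀ e' : G.E, (∀ x ∈ G.ends e', x ∈ Set.range f) → e' ∈ Set.range g

/-- Regularization: if G is regular with ω(G) ≤ Δ(G), R(G) = G; otherwise take two
disjoint copies of G and join each vertex x to its copy by
max(Δ(G), ω(G)) − deg_G(x) parallel edges. -/
noncomputable def regularize (G : Multigraph) : Multigraph :=
  if (∀ x : G.V, G.degree x = G.maxDegree) ∧ G.density ≤ G.maxDegree then G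
  else
    { V := G.V ⊕ G.V
      E := G.E ⊕ G.E ⊕ (Σ x : G.V, Fin (max G.maxDegree G.density - G.degree x))
      fintypeV := inferInstance
      decEqV := inferInstance
      fintypeE := inferInstance
      decEqE := inferInstance
      ends := fun e =>
        match e with
        | Sum.inl e => (G.ends e).map Sum.inl
        | Sum.inr (Sum.inl e) => (G.ends e).map Sum.inr
        | Sum.inr (Sum.inr p) => s(Sum.inl p.1, Sum.inr p.1)
      noLoops := by
        rintro (e | e | p)
        · rw [Sym2.isDiag_map Sum.inl_injective]; exact G.noLoops e
        · rw [Sym2.isDiag_map Sum.inr_injective]; exact G.noLoops e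
        · rw [Sym2.mk_isDiag_iff]; simp }

end Multigraph

/-- if G is Δ-regular (Δ = Δ(G)) and ω(G) ≤ Δ, then τ(G) = Δ. -/
theorem stmt_8 (G : Multigraph) (hreg : ∀ x : G.V, G.degree x = G.maxDegree)
    (hω : G.density ≤ G.maxDegree) :
    G.tau = G.maxDegree := by
  classical
  have hmem : G.maxDegree ∈ {c : ℕ | ∃ μ : G.V → Finset (Fin c), G.IsDegreeColoring c μ} := by
    refine ⟨fun _ => Finset.univ, fun x => by simp [hreg x], fun S => ?_⟩
    have hsum : ∑ i : Fin G.maxDegree,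
        (S.filter fun x => i ∈ (Finset.univ : Finset (Fin G.maxDegree))).card / 2
        = G.maxDegree * (S.card / 2) := by
      simp [Finset.filter_true_of_mem]
    rw [hsum]
    by_cases h2 : 2 ≤ S.card
    · have hS : S ∈ Finset.univ.powerset.filter fun T : Finset G.V => 2 ≤ T.card := by
        simp [h2]
      have hle : Multigraph.ceilDiv (G.edgesIn S).card (S.card / 2) ≤ G.density :=
        Finset.le_sup (f := fun T => Multigraph.ceilDiv (G.edgesIn T).card (T.card / 2)) hS
      have hle' : Multigraph.ceilDiv (G.edgesIn S).card (S.card / 2) ≤ G.maxDegree := hle.trans hω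
      set a := (G.edgesIn S).card
      set b := S.card / 2 with hb
      have hb1 : 1 ≤ b := by omega
      unfold Multigraph.ceilDiv at hle'
      by_contra hlt
      push_neg at hlt
      have hmul : (G.maxDegree + 1) * b ≤ a + b - 1 := by rw [add_mul, one_mul]; omega
      have := (Nat.le_div_iff_mul_le (by omega : 0 < b)).mpr hmul
      omega
    · have hempty : G.edgesIn S = ∅ := by
        rw [Finset.eq_empty_iff_forall_notMem]
        intro e he
        rw [Multigraph.edgesIn, Finset.mem_filter] at he
        obtain ⟨⟨a, b⟩, hab⟩ := Quot.exists_rep (G.ends e)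
        have hab' : G.ends e = s(a, b) := hab.symm
        have hne : a ≠ b := by
          intro h
          exact G.noLoops e (by rw [hab']; exact Sym2.mk_isDiag_iff.mpr h)
        have ha : a ∈ S := he.2 a (by rw [hab']; simp)
        have hbS : b ∈ S := he.2 b (by rw [hab']; simp)
        have : 1 < S.card := Finset.one_lt_card.mpr ⟨a, ha, b, hbS, hne⟩
        omega
      simp [hempty]
  refine le_antisymm (Nat.sInf_le hmem) (le_csInf ⟨_, hmem⟩ ?_)
  rintro c ⟨μ, hdeg, -⟩
  by_cases hV : Nonempty G.V
  · obtain ⟨x⟩ := hV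
    have h1 : (μ x).card = G.maxDegree := by rw [hdeg x, hreg x]
    have h2 : (μ x).card ≤ c := by
      calc (μ x).card ≤ Fintype.card (Fin c) := Finset.card_le_univ _
        _ = c := Fintype.card_fin c
    omega
  · haveI hE : IsEmpty G.V := not_nonempty_iff.mp hV
    have : G.maxDegree = 0 := by
      simp [Multigraph.maxDegree, Finset.univ_eq_empty]
    omega
end

section
/- For every multigraph G, the regularization R(G) satisfies ω(G) ≤ ω(R(G)) ≤ max(Δ(G), ω(G)). -/
open Finset

namespace Multigraph

open Finset
open scoped Classical

variable (G : Multigraph)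

lemma aux_ceilDiv_le_iff {a b m : ℕ} (hb : 0 < b) : ceilDiv a b ≤ m ↔ a ≤ m * b := by
  rw [ceilDiv, Nat.div_le_iff_le_mul_add_pred hb, mul_comm]
  omega

lemma aux_degree_le_maxDegree (x : G.V) : G.degree x ≤ G.maxDegree :=
  Finset.le_sup (mem_univ x)

private lemma aux_sym2_two_mem {α : Type} (z : Sym2 α) (h : ¬ z.IsDiag) :
    ∃ x y, x ≠ y ∧ x ∈ z ∧ y ∈ z := by
  revert h
  induction z using Sym2.ind with
  | _ x y =>
    intro h
    exact ⟨x, y, by simpa [Sym2.mk_isDiag_iff] using h, by simp, by simp⟩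

lemma aux_mem_edgesIn {S : Finset G.V} {e : G.E} :
    e ∈ G.edgesIn S ↔ ∀ x ∈ G.ends e, x ∈ S := by
  simp [edgesIn]

lemma aux_two_le_card_of_mem_edgesIn {S : Finset G.V} {e : G.E} (he : e ∈ G.edgesIn S) :
    2 ≤ S.card := by
  obtain ⟨x, y, hxy, hx, hy⟩ := aux_sym2_two_mem _ (G.noLoops e)
  rw [G.aux_mem_edgesIn] at he
  exact Finset.one_lt_card.mpr ⟨x, he x hx, y, he y hy, hxy⟩

lemma aux_edgesIn_card_le (S : Finset G.V) :
    (G.edgesIn S).card ≤ G.density * (S.card / 2) := by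
  by_cases h2 : 2 ≤ S.card
  · have hm : ceilDiv (G.edgesIn S).card (S.card / 2) ≤ G.density := by
      rw [density]
      exact Finset.le_sup (f := fun T : Finset G.V => ceilDiv (G.edgesIn T).card (T.card / 2))
        (b := S) (by simp [h2])
    exact (aux_ceilDiv_le_iff (by omega)).mp hm
  · have : G.edgesIn S = ∅ := by
      rw [Finset.eq_empty_iff_forall_notMem]
      intro e he
      exact h2 (G.aux_two_le_card_of_mem_edgesIn he)
    simp [this]

lemma aux_edgesIn_mono {S T : Finset G.V} (h : S ⊆ T) : G.edgesIn S ⊆ G.edgesIn T := by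
  intro e he
  rw [G.aux_mem_edgesIn] at he ⊢
  exact fun x hx => h (he x hx)

lemma aux_card_add_card_le_sum_degree (I : Finset G.V) (X Y : Finset G.E)
    (hX : ∀ e ∈ X, ∃ x ∈ I, x ∈ G.ends e) (hY : ∀ e ∈ Y, ∃ x ∈ I, x ∈ G.ends e)
    (hXY : ∀ e ∈ X ∩ Y, ∀ x ∈ G.ends e, x ∈ I) :
    X.card + Y.card ≤ ∑ x ∈ I, G.degree x := by
  have hdeg : ∑ x ∈ I, G.degree x = ∑ e : G.E, (I.filter fun x => x ∈ G.ends e).card := by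
    simp only [degree, Finset.card_filter]
    exact Finset.sum_comm
  have key : ∀ e ∈ X ∪ Y,
      1 + (if e ∈ X ∩ Y then 1 else 0) ≤ (I.filter fun x => x ∈ G.ends e).card := by
    intro e he
    by_cases hi : e ∈ X ∩ Y
    · obtain ⟨x, y, hxy, hx, hy⟩ := aux_sym2_two_mem _ (G.noLoops e)
      simp only [hi, if_true]
      exact Finset.one_lt_card.mpr
        ⟨x, mem_filter.mpr ⟨hXY e hi x hx, hx⟩, y, mem_filter.mpr ⟨hXY e hi y hy, hy⟩, hxy⟩
    · simp only [hi, if_false, add_zero]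
      rcases Finset.mem_union.mp he with h | h
      · obtain ⟨x, hxI, hxe⟩ := hX e h
        exact Finset.card_pos.mpr ⟨x, mem_filter.mpr ⟨hxI, hxe⟩⟩
      · obtain ⟨x, hxI, hxe⟩ := hY e h
        exact Finset.card_pos.mpr ⟨x, mem_filter.mpr ⟨hxI, hxe⟩⟩
  have hinter : (X ∩ Y).card = ∑ e ∈ X ∪ Y, (if e ∈ X ∩ Y then 1 else 0) := by
    rw [← Finset.card_filter, Finset.filter_mem_eq_inter,
      Finset.inter_eq_right.mpr (Finset.inter_subset_union)]
  calc X.card + Y.card = (X ∪ Y).card + (X ∩ Y).card :=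
        (Finset.card_union_add_card_inter X Y).symm
    _ = ∑ e ∈ X ∪ Y, (1 + if e ∈ X ∩ Y then 1 else 0) := by
        rw [Finset.sum_add_distrib, Finset.sum_const, smul_eq_mul, mul_one, ← hinter]
    _ ≤ ∑ e ∈ X ∪ Y, (I.filter fun x => x ∈ G.ends e).card := Finset.sum_le_sum key
    _ ≤ ∑ e : G.E, (I.filter fun x => x ∈ G.ends e).card :=
        Finset.sum_le_sum_of_subset (Finset.subset_univ _)
    _ = ∑ x ∈ I, G.degree x := hdeg.symm

/-- The doubled graph from the `else` branch of `regularize`. -/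
noncomputable def R2 (G : Multigraph) : Multigraph :=
  { V := G.V ⊕ G.V
    E := G.E ⊕ G.E ⊕ (Σ x : G.V, Fin (max G.maxDegree G.density - G.degree x))
    fintypeV := inferInstance
    decEqV := inferInstance
    fintypeE := inferInstance
    decEqE := inferInstance
    ends := fun e =>
      match e with
      | Sum.inl e => (G.ends e).map Sum.inl
      | Sum.inr (Sum.inl e) => (G.ends e).map Sum.inr
      | Sum.inr (Sum.inr p) => s(Sum.inl p.1, Sum.inr p.1)
    noLoops := by
      rintro (e | e | p)
      · rw [Sym2.isDiag_map Sum.inl_injective]; exact G.noLoops e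
      · rw [Sym2.isDiag_map Sum.inr_injective]; exact G.noLoops e
      · rw [Sym2.mk_isDiag_iff]; simp }

lemma regularize_eq_R2
    (h : ¬((∀ x : G.V, G.degree x = G.maxDegree) ∧ G.density ≤ G.maxDegree)) :
    G.regularize = R2 G := by
  unfold regularize
  rw [if_neg h]
  rfl

lemma R2_ends_inl (e : G.E) : (R2 G).ends (Sum.inl e) = (G.ends e).map Sum.inl := rfl

lemma R2_ends_inrl (e : G.E) :
    (R2 G).ends (Sum.inr (Sum.inl e)) = (G.ends e).map Sum.inr := rfl

lemma R2_ends_inrr (p : Σ x : G.V, Fin (max G.maxDegree G.density - G.degree x)) :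
    (R2 G).ends (Sum.inr (Sum.inr p)) = s(Sum.inl p.1, Sum.inr p.1) := rfl

lemma R2_edgesIn_card (S : Finset (G.V ⊕ G.V)) :
    ((R2 G).edgesIn S).card =
      (G.edgesIn S.toLeft).card + (G.edgesIn S.toRight).card +
        ∑ x ∈ S.toLeft ∩ S.toRight, (max G.maxDegree G.density - G.degree x) := by
  rw [edgesIn.eq_1 (R2 G) S, Finset.card_filter]
  erw [Fintype.sum_sum_type, Fintype.sum_sum_type]
  have e1 : (∑ e : G.E, if ∀ v ∈ (R2 G).ends (Sum.inl e), v ∈ S then 1 else 0)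
      = (G.edgesIn S.toLeft).card := by
    rw [edgesIn, Finset.card_filter]
    refine Finset.sum_congr rfl fun e _ => if_congr ?_ rfl rfl
    rw [R2_ends_inl]
    constructor
    · intro h x hx
      rw [Finset.mem_toLeft]
      exact h _ (Sym2.mem_map.mpr ⟨x, hx, rfl⟩)
    · intro h v hv
      obtain ⟨x, hx, rfl⟩ := Sym2.mem_map.mp hv
      exact Finset.mem_toLeft.mp (h x hx)
  have e2 : (∑ e : G.E, if ∀ v ∈ (R2 G).ends (Sum.inr (Sum.inl e)), v ∈ S then 1 else 0)
      = (G.edgesIn S.toRight).card := by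
    rw [edgesIn, Finset.card_filter]
    refine Finset.sum_congr rfl fun e _ => if_congr ?_ rfl rfl
    rw [R2_ends_inrl]
    constructor
    · intro h x hx
      rw [Finset.mem_toRight]
      exact h _ (Sym2.mem_map.mpr ⟨x, hx, rfl⟩)
    · intro h v hv
      obtain ⟨x, hx, rfl⟩ := Sym2.mem_map.mp hv
      exact Finset.mem_toRight.mp (h x hx)
  have e3 : (∑ p : (Σ x : G.V, Fin (max G.maxDegree G.density - G.degree x)),
        if ∀ v ∈ (R2 G).ends (Sum.inr (Sum.inr p)), v ∈ S then 1 else 0)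
      = ∑ x ∈ S.toLeft ∩ S.toRight, (max G.maxDegree G.density - G.degree x) := by
    rw [← Finset.univ_sigma_univ, Finset.sum_sigma]
    have hx : ∀ x : G.V, (∑ k : Fin (max G.maxDegree G.density - G.degree x),
        if ∀ v ∈ (R2 G).ends (Sum.inr (Sum.inr ⟨x, k⟩)), v ∈ S then 1 else 0)
        = if x ∈ S.toLeft ∩ S.toRight then (max G.maxDegree G.density - G.degree x) else 0 := by
      intro x
      have hcond : (∀ v ∈ s(Sum.inl x, (Sum.inr x : G.V ⊕ G.V)), v ∈ S)
          ↔ x ∈ S.toLeft ∩ S.toRight := by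
        rw [Finset.mem_inter, Finset.mem_toLeft, Finset.mem_toRight]
        constructor
        · intro h
          exact ⟨h _ (by simp), h _ (by simp)⟩
        · rintro ⟨h1, h2⟩ v hv
          rcases Sym2.mem_iff.mp hv with rfl | rfl
          · exact h1
          · exact h2
      by_cases hx : x ∈ S.toLeft ∩ S.toRight
      · rw [if_pos hx]
        have h1 : ∀ k : Fin (max G.maxDegree G.density - G.degree x),
            (if ∀ v ∈ (R2 G).ends (Sum.inr (Sum.inr ⟨x, k⟩)), v ∈ S then 1 else 0) = 1 :=
          fun k => if_pos (hcond.mpr hx)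
        rw [Finset.sum_congr rfl (fun k _ => h1 k), Finset.sum_const, smul_eq_mul, mul_one,
          Finset.card_univ, Fintype.card_fin]
      · rw [if_neg hx]
        have h1 : ∀ k : Fin (max G.maxDegree G.density - G.degree x),
            (if ∀ v ∈ (R2 G).ends (Sum.inr (Sum.inr ⟨x, k⟩)), v ∈ S then 1 else 0) = 0 :=
          fun k => if_neg (fun hc => hx (hcond.mp hc))
        rw [Finset.sum_congr rfl (fun k _ => h1 k), Finset.sum_const, smul_eq_mul, mul_zero]
    rw [Finset.sum_congr rfl (fun x _ => hx x), Finset.sum_ite_mem, Finset.univ_inter]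
  rw [← e1, ← e2, ← e3, add_assoc]
  congr!

lemma R2_edgesIn_card_le (S : Finset (G.V ⊕ G.V)) :
    ((R2 G).edgesIn S).card ≤ max G.maxDegree G.density * (S.card / 2) := by
  set m := max G.maxDegree G.density with hm
  set A := S.toLeft with hA
  set B := S.toRight with hB
  set A' := A \ B with hA'
  set B' := B \ A with hB'
  set I := A ∩ B with hI
  have hA'sub : G.edgesIn A' ⊆ G.edgesIn A := G.aux_edgesIn_mono sdiff_subset
  have hB'sub : G.edgesIn B' ⊆ G.edgesIn B := G.aux_edgesIn_mono sdiff_subset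
  set X := G.edgesIn A \ G.edgesIn A' with hXdef
  set Y := G.edgesIn B \ G.edgesIn B' with hYdef
  have hXcard : X.card + (G.edgesIn A').card = (G.edgesIn A).card :=
    Finset.card_sdiff_add_card_eq_card hA'sub
  have hYcard : Y.card + (G.edgesIn B').card = (G.edgesIn B).card :=
    Finset.card_sdiff_add_card_eq_card hB'sub
  have hX : ∀ e ∈ X, ∃ x ∈ I, x ∈ G.ends e := by
    intro e he
    rw [hXdef, Finset.mem_sdiff] at he
    obtain ⟨heA, heA'⟩ := he
    rw [G.aux_mem_edgesIn] at heA
    have h' : ¬ ∀ x ∈ G.ends e, x ∈ A' := fun h => heA' (G.aux_mem_edgesIn.mpr h)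
    push_neg at h'
    obtain ⟨x, hxe, hxA'⟩ := h'
    have hxA : x ∈ A := heA x hxe
    have hxB : x ∈ B := by
      by_contra hxB
      exact hxA' (Finset.mem_sdiff.mpr ⟨hxA, hxB⟩)
    exact ⟨x, Finset.mem_inter.mpr ⟨hxA, hxB⟩, hxe⟩
  have hY : ∀ e ∈ Y, ∃ x ∈ I, x ∈ G.ends e := by
    intro e he
    rw [hYdef, Finset.mem_sdiff] at he
    obtain ⟨heB, heB'⟩ := he
    rw [G.aux_mem_edgesIn] at heB
    have h' : ¬ ∀ x ∈ G.ends e, x ∈ B' := fun h => heB' (G.aux_mem_edgesIn.mpr h)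
    push_neg at h'
    obtain ⟨x, hxe, hxB'⟩ := h'
    have hxB : x ∈ B := heB x hxe
    have hxA : x ∈ A := by
      by_contra hxA
      exact hxB' (Finset.mem_sdiff.mpr ⟨hxB, hxA⟩)
    exact ⟨x, Finset.mem_inter.mpr ⟨hxA, hxB⟩, hxe⟩
  have hXY : ∀ e ∈ X ∩ Y, ∀ x ∈ G.ends e, x ∈ I := by
    intro e he x hxe
    rw [Finset.mem_inter, hXdef, hYdef, Finset.mem_sdiff, Finset.mem_sdiff] at he
    exact Finset.mem_inter.mpr
      ⟨G.aux_mem_edgesIn.mp he.1.1 x hxe, G.aux_mem_edgesIn.mp he.2.1 x hxe⟩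
  have hinc : X.card + Y.card ≤ ∑ x ∈ I, G.degree x :=
    G.aux_card_add_card_le_sum_degree I X Y hX hY hXY
  have hdegsum : ∑ x ∈ I, G.degree x + ∑ x ∈ I, (m - G.degree x) = m * I.card := by
    rw [← Finset.sum_add_distrib]
    have : ∀ x ∈ I, G.degree x + (m - G.degree x) = m := by
      intro x _
      have h1 : G.degree x ≤ m := le_trans (G.aux_degree_le_maxDegree x) (le_max_left _ _)
      omega
    rw [Finset.sum_congr rfl this, Finset.sum_const, smul_eq_mul, mul_comm]
  have hA2 : (G.edgesIn A').card ≤ m * (A'.card / 2) :=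
    le_trans (G.aux_edgesIn_card_le A')
      (Nat.mul_le_mul_right _ (le_max_right _ _))
  have hB2 : (G.edgesIn B').card ≤ m * (B'.card / 2) :=
    le_trans (G.aux_edgesIn_card_le B')
      (Nat.mul_le_mul_right _ (le_max_right _ _))
  have hcardS : A.card + B.card = S.card := Finset.card_toLeft_add_card_toRight (u := S)
  have hcardA : I.card + A'.card = A.card := Finset.card_inter_add_card_sdiff A B
  have hcardB : (B ∩ A).card + B'.card = B.card := Finset.card_inter_add_card_sdiff B A
  have hIB : (B ∩ A).card = I.card := by rw [hI, Finset.inter_comm]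
  have hfin : A'.card / 2 + B'.card / 2 + I.card ≤ S.card / 2 := by omega
  rw [G.R2_edgesIn_card S, ← hA, ← hB, ← hI]
  have key : (G.edgesIn A).card + (G.edgesIn B).card + ∑ x ∈ I, (m - G.degree x)
      ≤ m * (A'.card / 2) + m * (B'.card / 2) + m * I.card := by
    have h1 : (G.edgesIn A).card + (G.edgesIn B).card + ∑ x ∈ I, (m - G.degree x)
        ≤ (G.edgesIn A').card + (G.edgesIn B').card + m * I.card := by omega
    omega
  refine key.trans ?_
  have : m * (A'.card / 2) + m * (B'.card / 2) + m * I.card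
      = m * (A'.card / 2 + B'.card / 2 + I.card) := by ring
  rw [this]
  exact Nat.mul_le_mul_left m hfin

lemma R2_density_le : (R2 G).density ≤ max G.maxDegree G.density := by
  rw [density]
  apply Finset.sup_le
  intro S hS
  rw [Finset.mem_filter] at hS
  rw [aux_ceilDiv_le_iff (by have := hS.2; omega)]
  exact G.R2_edgesIn_card_le S

lemma le_R2_density : G.density ≤ (R2 G).density := by
  conv_lhs => rw [density]
  apply Finset.sup_le
  intro S hS
  rw [Finset.mem_filter] at hS
  have h2 := hS.2
  have hS' : 2 ≤ (S.image (Sum.inl : G.V → G.V ⊕ G.V)).card := by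
    rwa [Finset.card_image_of_injective _ Sum.inl_injective]
  have hle : ceilDiv ((R2 G).edgesIn (S.image Sum.inl)).card
      ((S.image (Sum.inl : G.V → G.V ⊕ G.V)).card / 2) ≤ (R2 G).density := by
    rw [density]
    exact Finset.le_sup
      (f := fun T : Finset ((R2 G).V) => ceilDiv ((R2 G).edgesIn T).card (T.card / 2))
      (b := (S.image Sum.inl : Finset ((R2 G).V)))
      (by simp only [Finset.mem_filter, Finset.mem_powerset]
          exact ⟨Finset.subset_univ _, hS'⟩)
  refine le_trans ?_ hle
  rw [Finset.card_image_of_injective _ Sum.inl_injective]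
  have hsub : (G.edgesIn S).card ≤ ((R2 G).edgesIn (S.image Sum.inl)).card := by
    have himg : (G.edgesIn S).image (Sum.inl : G.E → (R2 G).E)
        ⊆ (R2 G).edgesIn (S.image Sum.inl) := by
      intro e he
      obtain ⟨e₀, he₀, rfl⟩ := Finset.mem_image.mp he
      refine (aux_mem_edgesIn (R2 G)).mpr ?_
      intro v hv
      rw [R2_ends_inl] at hv
      replace hv := Sym2.mem_map.mp hv
      obtain ⟨x, hx, rfl⟩ := hv
      exact Finset.mem_image_of_mem _ (G.aux_mem_edgesIn.mp he₀ x hx)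
    calc (G.edgesIn S).card
        = ((G.edgesIn S).image (Sum.inl : G.E → (R2 G).E)).card :=
          (Finset.card_image_of_injective _ Sum.inl_injective).symm
      _ ≤ _ := Finset.card_le_card himg
  rw [ceilDiv, ceilDiv]
  exact Nat.div_le_div_right (by omega)

end Multigraph

/-- the regularization satisfies ω(G) ≤ ω(R(G)) ≤ max(Δ(G), ω(G)). -/
theorem stmt_10 (G : Multigraph) :
    G.density ≤ (Multigraph.regularize G).density ∧
    (Multigraph.regularize G).density ≤ max G.maxDegree G.density := by
  by_cases h : (∀ x : G.V, G.degree x = G.maxDegree) ∧ G.density ≤ G.maxDegree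
  · unfold Multigraph.regularize
    rw [if_pos h]
    exact ⟨le_rfl, le_max_right _ _⟩
  · rw [G.regularize_eq_R2 h]
    exact ⟨G.le_R2_density, G.R2_density_le⟩
end
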